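/- As ℓ → 0⁺, the quantity √ℓ · (cosh(r₀(ℓ)) − 1) converges to √(√3/(4π)) (equivalently, to 1/b where b = √(4π/√3)). -/

import Mathlib

open Real Filter Set Topology


/-- Inverse hyperbolic cosine: `arcosh y = log (y + √(y² - 1))` for `y ≥ 1`. -/
noncomputable def arcosh (y : ℝ) : ℝ := Real.log (y + Real.sqrt (y ^ 2 - 1))

/-- The function `W` from the paper. -/
noncomputable def W (x : ℝ) : ℝ :=
  (Real.sqrt 3 / (4 * Real.pi)) *
    (_root_.arcosh (1 + 1 / (1 + Real.sqrt (1 + (8 * x ^ 2 - 8 * x + 1) ^ 2)))) ^ 2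

/-- The function `κ(ℓ) = cosh(√(4πℓ/√3)) - 1`. -/
noncomputable def κ (ℓ : ℝ) : ℝ :=
  Real.cosh (Real.sqrt (4 * Real.pi * ℓ / Real.sqrt 3)) - 1

/-- The tube radius `r₀(ℓ)`, the positive real with
`cosh²(r₀(ℓ)) = (1/2)(√(1 - 2κ(ℓ))/κ(ℓ) + 1)`. -/
noncomputable def r₀ (ℓ : ℝ) : ℝ :=
  _root_.arcosh (Real.sqrt ((1 / 2) * (Real.sqrt (1 - 2 * κ ℓ) / κ ℓ + 1)))

lemma cosh_arcosh {y : ℝ} (hy : 1 ≤ y) : Real.cosh (_root_.arcosh y) = y := by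
  unfold _root_.arcosh
  set s := Real.sqrt (y ^ 2 - 1) with hs
  have hs0 : 0 ≤ s := Real.sqrt_nonneg _
  have hs2 : s ^ 2 = y ^ 2 - 1 := Real.sq_sqrt (by nlinarith)
  have hpos : 0 < y + s := by nlinarith
  have hinv : (y + s)⁻¹ = y - s := by
    rw [eq_comm]; exact eq_inv_of_mul_eq_one_left (by nlinarith)
  rw [Real.cosh_eq, Real.exp_log hpos, Real.exp_neg, Real.exp_log hpos, hinv]
  ring

lemma sinh_tendsto : Tendsto (fun x : ℝ => Real.sinh x / x) (nhdsWithin 0 {0}ᶜ) (nhds 1) := by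
  have h := Real.hasDerivAt_sinh 0
  rw [hasDerivAt_iff_tendsto_slope] at h
  simpa [slope_fun_def, Real.sinh_zero, Real.cosh_zero, div_eq_inv_mul] using h

lemma h3 : (0:ℝ) < Real.sqrt 3 := Real.sqrt_pos.mpr (by norm_num)

lemma κ_cont : Continuous κ := by unfold κ; fun_prop

lemma κ_tendsto : Tendsto κ (nhdsWithin 0 (Set.Ioi 0)) (nhds 0) := by
  have h : Tendsto κ (nhdsWithin 0 (Set.Ioi 0)) (nhds (κ 0)) :=
    (κ_cont.tendsto 0).mono_left nhdsWithin_le_nhds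
  have h0 : κ 0 = 0 := by simp [κ]
  rwa [h0] at h

lemma κ_pos {ℓ : ℝ} (hl : 0 < ℓ) : 0 < κ ℓ := by
  have harg : 0 < 4 * Real.pi * ℓ / Real.sqrt 3 :=
    div_pos (by nlinarith [Real.pi_pos]) h3
  have h1 : Real.sqrt (4 * Real.pi * ℓ / Real.sqrt 3) ≠ 0 := (Real.sqrt_pos.mpr harg).ne'
  have := Real.one_lt_cosh.mpr h1
  unfold κ; linarith

lemma ell_div_κ : Tendsto (fun ℓ : ℝ => ℓ / κ ℓ) (nhdsWithin 0 (Set.Ioi 0))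
    (nhds (Real.sqrt 3 / (2 * Real.pi))) := by
  set u : ℝ → ℝ := fun ℓ => Real.sqrt (4 * Real.pi * ℓ / Real.sqrt 3) / 2 with hu
  have hu_tendsto : Tendsto u (nhdsWithin 0 (Set.Ioi 0)) (nhdsWithin 0 {0}ᶜ) := by
    rw [tendsto_nhdsWithin_iff]
    constructor
    · have hcont : Continuous u := by fun_prop
      have h := (hcont.tendsto 0).mono_left
        (nhdsWithin_le_nhds : nhdsWithin (0:ℝ) (Set.Ioi 0) ≤ nhds 0)
      simpa [hu] using h
    · filter_upwards [self_mem_nhdsWithin] with ℓ hl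
      have hl' : (0:ℝ) < ℓ := hl
      have : 0 < u ℓ := div_pos (Real.sqrt_pos.mpr
        (div_pos (by nlinarith [Real.pi_pos]) h3)) two_pos
      simpa using this.ne'
  have hdiv : Tendsto (fun x : ℝ => x / Real.sinh x) (nhdsWithin 0 {0}ᶜ) (nhds 1) := by
    have := sinh_tendsto.inv₀ (by norm_num)
    simpa [inv_div] using this
  have hg : Tendsto (fun x : ℝ => Real.sqrt 3 / (2 * Real.pi) * (x / Real.sinh x) ^ 2)
      (nhdsWithin 0 {0}ᶜ) (nhds (Real.sqrt 3 / (2 * Real.pi))) := by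
    have := ((hdiv.pow 2).const_mul (Real.sqrt 3 / (2 * Real.pi)))
    simpa using this
  have hcomp := hg.comp hu_tendsto
  apply hcomp.congr'
  filter_upwards [self_mem_nhdsWithin] with ℓ hl
  have hl' : (0:ℝ) < ℓ := hl
  set t := Real.sqrt (4 * Real.pi * ℓ / Real.sqrt 3) with ht
  have harg : 0 < 4 * Real.pi * ℓ / Real.sqrt 3 := div_pos (by nlinarith [Real.pi_pos]) h3
  have ht0 : 0 < t := Real.sqrt_pos.mpr harg
  have ht2 : t ^ 2 = 4 * Real.pi * ℓ / Real.sqrt 3 := Real.sq_sqrt harg.le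
  have hκeq : κ ℓ = 2 * Real.sinh (t / 2) ^ 2 := by
    have h2 : Real.cosh t = 2 * Real.sinh (t / 2) ^ 2 + 1 := by
      have := Real.cosh_two_mul (t / 2)
      have hsq := Real.cosh_sq (t / 2)
      rw [show 2 * (t / 2) = t by ring] at this
      rw [this, hsq]; ring
    unfold κ; rw [← ht, h2]; ring
  have hsinh : 0 < Real.sinh (t / 2) := Real.sinh_pos_iff.mpr (by linarith)
  have hℓ : ℓ = t ^ 2 * Real.sqrt 3 / (4 * Real.pi) := by
    field_simp at ht2 ⊢
    nlinarith [Real.pi_pos, h3, Real.sq_sqrt (by norm_num : (0:ℝ) ≤ 3)]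
  show Real.sqrt 3 / (2 * Real.pi) * (u ℓ / Real.sinh (u ℓ)) ^ 2 = ℓ / κ ℓ
  have huℓ : u ℓ = t / 2 := by simp [hu, ht]
  rw [hκeq, huℓ, hℓ, eq_comm]
  field_simp
  ring

theorem sqrt_ell_cosh_tendsto :
    Filter.Tendsto (fun ℓ : ℝ => Real.sqrt ℓ * (Real.cosh (r₀ ℓ) - 1))
      (nhdsWithin 0 (Set.Ioi 0))
      (nhds (Real.sqrt (Real.sqrt 3 / (4 * Real.pi)))) := by
  have hid : Tendsto (fun ℓ : ℝ => ℓ) (nhdsWithin 0 (Set.Ioi 0)) (nhds 0) :=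
    tendsto_id.mono_left nhdsWithin_le_nhds
  have h1 : Tendsto (fun ℓ => Real.sqrt (1 - 2 * κ ℓ)) (nhdsWithin 0 (Set.Ioi 0))
      (nhds 1) := by
    have hin : Tendsto (fun ℓ => 1 - 2 * κ ℓ) (nhdsWithin 0 (Set.Ioi 0)) (nhds 1) := by
      have := (κ_tendsto.const_mul 2).const_sub 1
      simpa using this
    have := (Real.continuous_sqrt.tendsto 1).comp hin
    simpa [Function.comp_def] using this
  have hprod : Tendsto (fun ℓ => (1/2) * ((ℓ / κ ℓ) * Real.sqrt (1 - 2 * κ ℓ) + ℓ))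
      (nhdsWithin 0 (Set.Ioi 0)) (nhds (Real.sqrt 3 / (4 * Real.pi))) := by
    have h := ((ell_div_κ.mul h1).add hid).const_mul (1/2 : ℝ)
    have : (1/2 : ℝ) * (Real.sqrt 3 / (2 * Real.pi) * 1 + 0) = Real.sqrt 3 / (4 * Real.pi) := by
      ring
    rwa [this] at h
  have hsqrtA : Tendsto
      (fun ℓ => Real.sqrt ((1/2) * ((ℓ / κ ℓ) * Real.sqrt (1 - 2 * κ ℓ) + ℓ)))
      (nhdsWithin 0 (Set.Ioi 0)) (nhds (Real.sqrt (Real.sqrt 3 / (4 * Real.pi)))) :=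
    (Real.continuous_sqrt.tendsto _).comp hprod
  have hsqrtℓ : Tendsto (fun ℓ : ℝ => Real.sqrt ℓ) (nhdsWithin 0 (Set.Ioi 0)) (nhds 0) := by
    have := (Real.continuous_sqrt.tendsto 0).comp hid
    simpa [Function.comp_def] using this
  have hcomb := hsqrtA.sub hsqrtℓ
  rw [sub_zero] at hcomb
  apply hcomb.congr'
  filter_upwards [self_mem_nhdsWithin,
    κ_tendsto.eventually_lt_const (by norm_num : (0:ℝ) < 1/3)] with ℓ hl hκsmall
  have hl' : (0:ℝ) < ℓ := hl
  have hκp : 0 < κ ℓ := κ_pos hl'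
  set s := Real.sqrt (1 - 2 * κ ℓ) with hs
  have hκs : κ ℓ ≤ s := Real.le_sqrt_of_sq_le (by nlinarith)
  have hA1 : 1 ≤ (1/2) * (s / κ ℓ + 1) := by
    have : (1:ℝ) ≤ s / κ ℓ := (one_le_div hκp).mpr hκs
    linarith
  have hcosh : Real.cosh (r₀ ℓ) = Real.sqrt ((1/2) * (s / κ ℓ + 1)) := by
    unfold r₀
    rw [← hs]
    exact _root_.cosh_arcosh ((Real.le_sqrt' one_pos).mpr (by nlinarith))
  have hAeq : (1/2 : ℝ) * ((ℓ / κ ℓ) * s + ℓ) = ℓ * ((1/2) * (s / κ ℓ + 1)) := by ring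
  show Real.sqrt ((1/2) * ((ℓ / κ ℓ) * s + ℓ)) - Real.sqrt ℓ
      = Real.sqrt ℓ * (Real.cosh (r₀ ℓ) - 1)
  rw [hAeq, Real.sqrt_mul hl'.le, hcosh]
  ring
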